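/- Probability reallocation inequalities in the UMAS proof: let P be a ranked list containing d at position n, and let P̃ be P with e in place of d. Under the almost-sure containment {s_d ≥ C_d} ⊆ {s_e ≥ C_e}, the assignment probabilities satisfy: L^P_u = L^{P̃}_u for u < n; L^P_n ≤ L^{P̃}_n; L^P_u ≥ L^{P̃}_u for n < u ≤ |P|; and L^P_0 ≥ L^{P̃}_0. -/

import Mathlib

open MeasureTheory Set

/-- The event that the agent's score at school `j` clears the (random) cutoff. -/
def clearSet {Ω J : Type*} (C : J → Ω → ℝ) (s : J → ℝ) (j : J) : Set Ω :=
  {ω | C j ω ≤ s j}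

/-- `L^P_u` for listed positions (0-indexed): the probability that the school in
position `u` of `p` is the lowest-ranked listed school whose cutoff the agent clears. -/
noncomputable def assignProb {Ω J : Type*} [MeasurableSpace Ω] (μ : Measure Ω)
    (C : J → Ω → ℝ) (s : J → ℝ) (d₀ : J) (p : List J) (u : ℕ) : ℝ :=
  (μ ((⋂ v ∈ Finset.range u, (clearSet C s (p.getD v d₀))ᶜ) ∩
      clearSet C s (p.getD u d₀))).toReal

/-- `L^P_0`: the probability of remaining unassigned. -/
noncomputable def outsideProb {Ω J : Type*} [MeasurableSpace Ω] (μ : Measure Ω)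
    (C : J → Ω → ℝ) (s : J → ℝ) (d₀ : J) (p : List J) : ℝ :=
  (μ (⋂ v ∈ Finset.range p.length, (clearSet C s (p.getD v d₀))ᶜ)).toReal

/-- If `S \ T` is contained in a null set, then `μ S ≤ μ T`. -/
lemma meas_le_of_diff_subset_null {Ω : Type*} [MeasurableSpace Ω] (μ : Measure Ω)
    {S T N : Set Ω} (hsub : S \ T ⊆ N) (hN : μ N = 0) : μ S ≤ μ T := by
  calc μ S ≤ μ (S ∩ T) + μ (S \ T) := measure_le_inter_add_diff μ S T
    _ ≤ μ T + μ N := add_le_add (measure_mono inter_subset_right) (measure_mono hsub)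
    _ = μ T := by rw [hN, add_zero]

/-- Probability reallocation inequalities in the UMAS proof: if `P` lists `d` at
position `n` and `P̃` is `P` with `e` in place of `d`, then under the almost-sure
containment `{s_d ≥ C_d} ⊆ {s_e ≥ C_e}` we have `L^P_u = L^{P̃}_u` for `u < n`,
`L^P_n ≤ L^{P̃}_n`, `L^P_u ≥ L^{P̃}_u` for `n < u ≤ |P|`, and `L^P_0 ≥ L^{P̃}_0`. -/
theorem umas_probability_reallocation
    {Ω J : Type*} [MeasurableSpace Ω] [DecidableEq J]
    (μ : Measure Ω) [IsProbabilityMeasure μ]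
    (C : J → Ω → ℝ) (s : J → ℝ) (d₀ : J)
    (hmeas : ∀ j : J, MeasurableSet (clearSet C s j))
    (P : List J) (hPnd : P.Nodup)
    (d e : J) (he : e ∉ P)
    (n : ℕ) (hn : n < P.length) (hdn : P.getD n d₀ = d)
    (hcontain : μ (clearSet C s d \ clearSet C s e) = 0) :
    (∀ u : ℕ, u < n →
        assignProb μ C s d₀ P u =
          assignProb μ C s d₀ (P.map fun x => if x = d then e else x) u) ∧
    (assignProb μ C s d₀ P n ≤
        assignProb μ C s d₀ (P.map fun x => if x = d then e else x) n) ∧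
    (∀ u : ℕ, n < u → u < P.length →
        assignProb μ C s d₀ (P.map fun x => if x = d then e else x) u ≤
          assignProb μ C s d₀ P u) ∧
    (outsideProb μ C s d₀ (P.map fun x => if x = d then e else x) ≤
        outsideProb μ C s d₀ P) := by
  set f : J → J := fun x => if x = d then e else x with hf
  set Q : List J := P.map f with hQdef
  have hQlen : Q.length = P.length := List.length_map f
  have hPd : P[n] = d := by rw [← List.getD_eq_getElem P d₀ hn]; exact hdn
  -- entries at positions other than `n` are not `d`
  have hne : ∀ v, v < P.length → v ≠ n → P.getD v d₀ ≠ d := by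
    intro v hv hvn hvd
    apply hvn
    have : P[v] = P[n] := by
      rw [hPd, ← List.getD_eq_getElem P d₀ hv]; exact hvd
    exact (List.Nodup.getElem_inj_iff hPnd).mp this
  have hQgetD : ∀ v, v < P.length → Q.getD v d₀ = f (P.getD v d₀) := by
    intro v hv
    rw [List.getD_eq_getElem Q d₀ (by rw [hQlen]; exact hv),
      List.getD_eq_getElem P d₀ hv]
    exact List.getElem_map f
  have hQeq : ∀ v, v < P.length → v ≠ n → Q.getD v d₀ = P.getD v d₀ := by
    intro v hv hvn
    rw [hQgetD v hv, hf]
    exact if_neg (hne v hv hvn)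
  have hQn : Q.getD n d₀ = e := by
    rw [hQgetD n hn, hdn, hf]; simp
  have hAeq : ∀ u, u ≤ n →
      (⋂ v ∈ Finset.range u, (clearSet C s (P.getD v d₀))ᶜ) =
        (⋂ v ∈ Finset.range u, (clearSet C s (Q.getD v d₀))ᶜ) := by
    intro u hu
    apply iInter₂_congr
    intro v hv
    rw [hQeq v (lt_of_lt_of_le (Finset.mem_range.mp hv) (hu.trans hn.le))
      (Nat.ne_of_lt (lt_of_lt_of_le (Finset.mem_range.mp hv) hu))]
  have htoReal : ∀ S T : Set Ω, μ S ≤ μ T → (μ S).toReal ≤ (μ T).toReal := by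
    intro S T h
    exact ENNReal.toReal_le_toReal (measure_ne_top μ S) (measure_ne_top μ T) |>.mpr h
  refine ⟨?_, ?_, ?_, ?_⟩
  · -- u < n : equality
    intro u hu
    unfold assignProb
    rw [hAeq u hu.le, hQeq u (hu.trans hn) (Nat.ne_of_lt hu)]
  · -- position n
    unfold assignProb
    apply htoReal
    rw [hAeq n le_rfl, hdn, hQn]
    apply meas_le_of_diff_subset_null μ (N := clearSet C s d \ clearSet C s e) _ hcontain
    intro ω hω
    exact ⟨hω.1.2, fun hωe => hω.2 ⟨hω.1.1, hωe⟩⟩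
  · -- n < u < length
    intro u hnu hu
    unfold assignProb
    apply htoReal
    have hQu : Q.getD u d₀ = P.getD u d₀ := hQeq u hu (Nat.ne_of_gt hnu)
    rw [hQu]
    apply meas_le_of_diff_subset_null μ (N := clearSet C s d \ clearSet C s e) _ hcontain
    intro ω hω
    obtain ⟨⟨hωQ, hωu⟩, hωnot⟩ := hω
    simp only [mem_iInter, Finset.mem_range, mem_compl_iff] at hωQ
    have hωd : ω ∈ clearSet C s d := by
      by_contra hωd
      apply hωnot
      refine ⟨?_, hωu⟩
      simp only [mem_iInter, Finset.mem_range, mem_compl_iff]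
      intro v hv
      by_cases hvn : v = n
      · subst hvn; rw [hdn]; exact hωd
      · rw [← hQeq v (hv.trans hu) hvn]; exact hωQ v hv
    have hωe : ω ∉ clearSet C s e := by
      have := hωQ n hnu
      rwa [hQn] at this
    exact ⟨hωd, hωe⟩
  · -- outside probability
    unfold outsideProb
    apply htoReal
    rw [hQlen]
    apply meas_le_of_diff_subset_null μ (N := clearSet C s d \ clearSet C s e) _ hcontain
    intro ω hω
    obtain ⟨hωQ, hωnot⟩ := hω
    simp only [mem_iInter, Finset.mem_range, mem_compl_iff] at hωQ
    have hωd : ω ∈ clearSet C s d := by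
      by_contra hωd
      apply hωnot
      simp only [mem_iInter, Finset.mem_range, mem_compl_iff]
      intro v hv
      by_cases hvn : v = n
      · subst hvn; rw [hdn]; exact hωd
      · rw [← hQeq v hv hvn]; exact hωQ v hv
    have hωe : ω ∉ clearSet C s e := by
      have := hωQ n hn
      rwa [hQn] at this
    exact ⟨hωd, hωe⟩
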